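/- arXiv:2201.04587 — 2 statements merged into one kernel-verified Lean document; each statement's English description precedes it below -/
import Mathlib

section
/- Let F be analytic on the closed right half-plane with |F(p)| ≤ C(1+|p|)^{-b}, b > 1, and define f(t) = (1/2π) ∫_ℝ e^{itη} F(iη) dη. Then f(0) = 0. -/
open Complex MeasureTheory Real Filter Topology

theorem stmt_2 (F : ℂ → ℂ) (C b : ℝ) (hC : 0 < C) (hb : 1 < b)
    (hF : ∃ U : Set ℂ, IsOpen U ∧ {p : ℂ | 0 ≤ p.re} ⊆ U ∧ DifferentiableOn ℂ F U)
    (hbd : ∀ p : ℂ, 0 ≤ p.re → ‖F p‖ ≤ C * (1 + ‖p‖) ^ (-b))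
    (f : ℝ → ℂ)
    (hf : ∀ t : ℝ, f t = (1 / (2 * Real.pi) : ℂ) *
      ∫ η : ℝ, Complex.exp (Complex.I * t * η) * F (Complex.I * η)) :
    f 0 = 0 := by
  obtain ⟨U, hUo, hUs, hFd⟩ := hF
  set r : ℝ := (b - 1) / 2 with hrdef
  set s : ℝ := (b + 1) / 2 with hsdef
  have hr : 0 < r := by simp only [hrdef]; linarith
  have hs : 1 < s := by simp only [hsdef]; linarith
  have hrs : r + s = b := by simp only [hrdef, hsdef]; ring
  -- key pointwise bound
  have key : ∀ (x y : ℝ) (p : ℂ), 0 ≤ x → 0 ≤ y → x ≤ ‖p‖ → y ≤ ‖p‖ → 0 ≤ p.re →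
      ‖F p‖ ≤ C * ((1 + x) ^ (-r) * (1 + y) ^ (-s)) := by
    intro x y p hx hy hxp hyp hp
    have h1 : (0:ℝ) < 1 + x := by linarith
    have h2 : (0:ℝ) < 1 + y := by linarith
    have hb1 : (1 + ‖p‖ : ℝ) ^ (-b) = (1 + ‖p‖) ^ (-r) * (1 + ‖p‖) ^ (-s) := by
      rw [← Real.rpow_add (by positivity), ← hrs]; ring_nf
    refine le_trans (hbd p hp) ?_
    rw [hb1]
    gcongr C * (?_ * ?_)
    · exact Real.rpow_le_rpow_of_nonpos h1 (by linarith) (by linarith)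
    · exact Real.rpow_le_rpow_of_nonpos h2 (by linarith) (by linarith)
  have him : ∀ y : ℝ, ((Complex.I) * (y:ℂ)).re = 0 := by intro y; simp
  have hmem : ∀ p : ℂ, 0 ≤ p.re → p ∈ U := fun p hp => hUs hp
  -- continuity of F on the closed half plane
  have hFc : ContinuousOn F U := hFd.continuousOn
  -- integrable dominating function
  have hdom : Integrable (fun y : ℝ => (1 + |y|) ^ (-s)) := by
    have := integrable_one_add_norm (E := ℝ) (μ := volume) (r := s) (by simpa using hs)
    simpa [Real.norm_eq_abs] using this
  set M : ℝ := ∫ y : ℝ, (1 + |y|) ^ (-s) with hM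
  have hM0 : 0 ≤ M := integral_nonneg fun y => by positivity
  -- continuity of the boundary function
  have hgc : Continuous fun y : ℝ => F (Complex.I * y) := by
    refine hFc.comp_continuous (by continuity) fun y => hmem _ (by simp)
  -- integrability of the boundary function
  have hgi : Integrable fun y : ℝ => F (Complex.I * y) := by
    refine (hdom.const_mul C).mono' hgc.aestronglyMeasurable (ae_of_all _ fun y => ?_)
    have := key 0 |y| (Complex.I * y) le_rfl (abs_nonneg y) (by positivity)
      (by simp) (by simp)
    simpa using this
  -- bound on vertical segments
  have vert : ∀ σ T : ℝ, 0 ≤ σ → 0 ≤ T →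
      ‖∫ y in (-T)..T, F (σ + y * Complex.I)‖ ≤ C * (1 + σ) ^ (-r) * M := by
    intro σ T hσ hT
    have hc : ContinuousOn (fun y : ℝ => F ((σ:ℂ) + y * Complex.I)) (Set.uIcc (-T) T) := by
      refine hFc.comp (by fun_prop) fun y _ => hmem _ (by simp [hσ])
    have hbound : ∀ y : ℝ, ‖F ((σ:ℂ) + y * Complex.I)‖ ≤ C * ((1 + σ) ^ (-r) * (1 + |y|) ^ (-s)) := by
      intro y
      have hre : ((σ:ℂ) + y * Complex.I).re = σ := by simp
      have him' : ((σ:ℂ) + y * Complex.I).im = y := by simp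
      refine key σ |y| _ hσ (abs_nonneg y) ?_ ?_ (by simp [hσ])
      · calc σ = ((σ:ℂ) + y * Complex.I).re := hre.symm
          _ ≤ ‖(σ:ℂ) + y * Complex.I‖ := by
              simpa using Complex.abs_re_le_norm ((σ:ℂ) + y * Complex.I) |>.trans' (le_abs_self _)
      · calc |y| = |((σ:ℂ) + y * Complex.I).im| := by rw [him']
          _ ≤ ‖(σ:ℂ) + y * Complex.I‖ := Complex.abs_im_le_norm _
    have hbi : IntervalIntegrable (fun y : ℝ => C * ((1 + σ) ^ (-r) * (1 + |y|) ^ (-s)))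
        volume (-T) T := ((hdom.const_mul ((1+σ)^(-r))).const_mul C).intervalIntegrable
    calc ‖∫ y in (-T)..T, F (σ + y * Complex.I)‖
        ≤ |∫ y in (-T)..T, C * ((1 + σ) ^ (-r) * (1 + |y|) ^ (-s))| :=
          intervalIntegral.norm_integral_le_abs_of_norm_le (ae_of_all _ fun y => hbound y) hbi
      _ = ∫ y in (-T)..T, C * ((1 + σ) ^ (-r) * (1 + |y|) ^ (-s)) := by
          rw [abs_eq_self]
          rw [intervalIntegral.integral_of_le (by linarith)]
          exact integral_nonneg fun y => by positivity
      _ = (C * (1 + σ) ^ (-r)) * ∫ y in (-T)..T, (1 + |y|) ^ (-s) := by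
          rw [← intervalIntegral.integral_const_mul]; congr 1; ext y; ring
      _ ≤ (C * (1 + σ) ^ (-r)) * M := by
          refine mul_le_mul_of_nonneg_left ?_ (by positivity)
          rw [intervalIntegral.integral_of_le (by linarith)]
          exact setIntegral_le_integral hdom (ae_of_all _ fun y => by positivity)
      _ = C * (1 + σ) ^ (-r) * M := by ring
  -- bound on horizontal segments
  have horiz : ∀ T c : ℝ, 0 ≤ T →
      ‖∫ x in (0:ℝ)..T, F (x + c * Complex.I)‖ ≤ C * (1 + |c|) ^ (-r) * M := by
    intro T c hT
    have hbound : ∀ x : ℝ, x ∈ Set.Ioc (0:ℝ) T →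
        ‖F ((x:ℂ) + c * Complex.I)‖ ≤ C * ((1 + |c|) ^ (-r) * (1 + |x|) ^ (-s)) := by
      intro x hx
      refine key |c| |x| _ (abs_nonneg c) (abs_nonneg x) ?_ ?_ (by simp [hx.1.le])
      · calc |c| = |((x:ℂ) + c * Complex.I).im| := by simp
          _ ≤ ‖(x:ℂ) + c * Complex.I‖ := Complex.abs_im_le_norm _
      · calc |x| = |((x:ℂ) + c * Complex.I).re| := by simp
          _ ≤ ‖(x:ℂ) + c * Complex.I‖ := Complex.abs_re_le_norm _
    have hbi : IntervalIntegrable (fun x : ℝ => C * ((1 + |c|) ^ (-r) * (1 + |x|) ^ (-s)))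
        volume 0 T := ((hdom.const_mul ((1+|c|)^(-r))).const_mul C).intervalIntegrable
    calc ‖∫ x in (0:ℝ)..T, F (x + c * Complex.I)‖
        ≤ |∫ x in (0:ℝ)..T, C * ((1 + |c|) ^ (-r) * (1 + |x|) ^ (-s))| := by
          refine intervalIntegral.norm_integral_le_abs_of_norm_le ?_ hbi
          rw [Set.uIoc_of_le hT]
          exact (ae_restrict_iff' measurableSet_Ioc).2 (ae_of_all _ hbound)
      _ = ∫ x in (0:ℝ)..T, C * ((1 + |c|) ^ (-r) * (1 + |x|) ^ (-s)) := by
          rw [abs_eq_self, intervalIntegral.integral_of_le hT]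
          exact integral_nonneg fun y => by positivity
      _ = (C * (1 + |c|) ^ (-r)) * ∫ x in (0:ℝ)..T, (1 + |x|) ^ (-s) := by
          rw [← intervalIntegral.integral_const_mul]; congr 1; ext y; ring
      _ ≤ (C * (1 + |c|) ^ (-r)) * M := by
          refine mul_le_mul_of_nonneg_left ?_ (by positivity)
          rw [intervalIntegral.integral_of_le hT]
          exact setIntegral_le_integral hdom (ae_of_all _ fun y => by positivity)
      _ = C * (1 + |c|) ^ (-r) * M := by ring
  -- rectangle contour: bound on the truncated boundary integral
  have rect : ∀ T : ℝ, 0 ≤ T →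
      ‖∫ y in (-T)..T, F (Complex.I * y)‖ ≤ 3 * (C * (1 + T) ^ (-r) * M) := by
    intro T hT
    have hdiff : DifferentiableOn ℂ F
        (Set.uIcc ((⟨0, -T⟩ : ℂ).re) ((⟨T, T⟩ : ℂ).re) ×ℂ
          Set.uIcc ((⟨0, -T⟩ : ℂ).im) ((⟨T, T⟩ : ℂ).im)) := by
      refine hFd.mono fun p hp => hmem p ?_
      have := hp.1
      simp only [Complex.mem_reProdIm] at hp
      have h1 : p.re ∈ Set.uIcc (0:ℝ) T := hp.1
      rw [Set.uIcc_of_le hT] at h1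
      exact h1.1
    have h0 := Complex.integral_boundary_rect_eq_zero_of_differentiableOn F ⟨0, -T⟩ ⟨T, T⟩ hdiff
    simp only [smul_eq_mul] at h0
    -- h0 : Bot - Top + I * Vert - I * Left = 0
    have hleft : (∫ y in (-T)..T, F ((0:ℝ) + y * Complex.I))
        = ∫ y in (-T)..T, F (Complex.I * y) := by
      congr 1; ext y; norm_num [mul_comm]
    have hIeq : Complex.I * (∫ y in (-T)..T, F (Complex.I * y))
        = (∫ x in (0:ℝ)..T, F (x + (-T : ℝ) * Complex.I))
          - (∫ x in (0:ℝ)..T, F (x + (T:ℝ) * Complex.I))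
          + Complex.I * (∫ y in (-T)..T, F ((T:ℝ) + y * Complex.I)) := by
      rw [← hleft]
      have : ∀ A B V L : ℂ, A - B + Complex.I * V - Complex.I * L = 0 →
          Complex.I * L = A - B + Complex.I * V := by intro A B V L h; linear_combination -h
      exact this _ _ _ _ (by exact_mod_cast h0)
    have hnorm : ‖∫ y in (-T)..T, F (Complex.I * y)‖
        = ‖Complex.I * (∫ y in (-T)..T, F (Complex.I * y))‖ := by
      rw [norm_mul, Complex.norm_I, one_mul]
    rw [hnorm, hIeq]
    have h1 := horiz T (-T) hT
    have h2 := horiz T T hT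
    have h3 := vert T T hT hT
    rw [abs_neg, _root_.abs_of_nonneg hT] at h1
    rw [_root_.abs_of_nonneg hT] at h2
    calc ‖_ - _ + Complex.I * _‖
        ≤ ‖(∫ x in (0:ℝ)..T, F (x + (-T : ℝ) * Complex.I))
            - (∫ x in (0:ℝ)..T, F (x + (T:ℝ) * Complex.I))‖
          + ‖Complex.I * (∫ y in (-T)..T, F ((T:ℝ) + y * Complex.I))‖ := norm_add_le _ _
      _ ≤ (‖(∫ x in (0:ℝ)..T, F (x + (-T : ℝ) * Complex.I))‖
            + ‖(∫ x in (0:ℝ)..T, F (x + (T:ℝ) * Complex.I))‖)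
          + ‖Complex.I * (∫ y in (-T)..T, F ((T:ℝ) + y * Complex.I))‖ := by
            gcongr; exact norm_sub_le _ _
      _ ≤ (C * (1 + T) ^ (-r) * M + C * (1 + T) ^ (-r) * M) + C * (1 + T) ^ (-r) * M := by
            gcongr <;> first
              | exact h1
              | exact h2
              | (rw [norm_mul, Complex.norm_I, one_mul]; exact h3)
      _ = 3 * (C * (1 + T) ^ (-r) * M) := by ring
  -- limits
  have hlim1 : Tendsto (fun T : ℝ => ∫ y in (-T)..T, F (Complex.I * y)) atTop
      (𝓝 (∫ y : ℝ, F (Complex.I * y))) :=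
    intervalIntegral_tendsto_integral hgi tendsto_neg_atTop_atBot tendsto_id
  have hlim0 : Tendsto (fun T : ℝ => ∫ y in (-T)..T, F (Complex.I * y)) atTop (𝓝 0) := by
    apply squeeze_zero_norm' (Filter.eventually_atTop.2 ⟨0, fun T hT => rect T hT⟩)
    have : Tendsto (fun T : ℝ => (1 + T) ^ (-r)) atTop (𝓝 0) :=
      (tendsto_rpow_neg_atTop hr).comp (tendsto_atTop_add_const_left _ _ tendsto_id)
    have := this.const_mul (3 * C * M)
    rw [mul_zero] at this
    refine this.congr fun T => by ring
  have hint0 : (∫ y : ℝ, F (Complex.I * y)) = 0 := tendsto_nhds_unique hlim1 hlim0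
  rw [hf 0]
  have : (fun η : ℝ => Complex.exp (Complex.I * (0:ℝ) * η) * F (Complex.I * η))
      = fun η : ℝ => F (Complex.I * η) := by
    ext η; simp
  rw [this, hint0, mul_zero]
end

section
/- Let F be analytic on the closed right half-plane with |F(p)| ≤ C(1+|p|)^{-b}, b > 1, and define f(t) = (1/2π) ∫_ℝ e^{itη} F(iη) dη. Then for every q with Re q > 0, ∫_0^∞ e^{-qt} f(t) dt = F(q); i.e., F is the Laplace transform of f. -/
open Complex MeasureTheory Real Set Filter intervalIntegral Topology
open scoped Interval


lemma L1 {c : ℂ} (hc : 0 < c.re) : ∫ t in Set.Ioi (0:ℝ), Complex.exp (-c * t) = c⁻¹ := by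
  have hc0 : c ≠ 0 := fun h => by simp [h] at hc
  have key : ∫ t in Set.Ioi (0:ℝ), Complex.exp (-c * t) = 0 - (-c⁻¹ * Complex.exp (-c * 0)) := by
    apply integral_Ioi_of_hasDerivAt_of_tendsto' (f := fun t : ℝ => -c⁻¹ * Complex.exp (-c * t))
    · intro x _
      have h1 : HasDerivAt (fun z : ℂ => -c⁻¹ * Complex.exp (-c * z))
          (-c⁻¹ * (Complex.exp (-c * x) * -c)) (x : ℂ) := by
        exact (((Complex.hasDerivAt_exp _).comp _ ((hasDerivAt_id (x:ℂ)).const_mul (-c))).const_mul _).congr_deriv (by simp only [id_eq]; ring)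
      have := h1.comp_ofReal
      convert this using 1
      · rfl
      field_simp
    · apply Integrable.mono' (g := fun t => Real.exp (-c.re * t))
        (exp_neg_integrableOn_Ioi 0 hc)
      · apply Continuous.aestronglyMeasurable
        exact Complex.continuous_exp.comp (continuous_const.mul Complex.continuous_ofReal)
      · filter_upwards with t
        rw [Complex.norm_exp]
        simp
    · rw [show (0:ℂ) = -c⁻¹ * 0 by ring]
      apply Tendsto.const_mul
      rw [tendsto_zero_iff_norm_tendsto_zero]
      have : (fun t : ℝ => ‖Complex.exp (-c * t)‖) = fun t : ℝ => Real.exp (-c.re * t) := by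
        ext t; rw [Complex.norm_exp]; simp
      rw [this]
      exact Real.tendsto_exp_atBot.comp (tendsto_id.const_mul_atTop_of_neg (neg_neg_iff_pos.mpr hc) |>.congr (fun x => rfl))
  simpa using key


lemma logneg_neg {z : ℂ} (h : z.im < 0) : Complex.log (-z) = Complex.log z + π * I := by
  apply Complex.ext <;>
    simp [Complex.log_re, Complex.log_im, Complex.arg_neg_eq_arg_add_pi_of_im_neg h]

lemma logneg_pos {z : ℂ} (h : 0 < z.im) : Complex.log (-z) = Complex.log z - π * I := by
  apply Complex.ext <;>
    simp [Complex.log_re, Complex.log_im, Complex.arg_neg_eq_arg_sub_pi_of_im_pos h]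

lemma L2 {w : ℂ} (hw : w.im ≠ 0) (a₁ a₂ : ℝ) :
    ∫ x in a₁..a₂, ((x:ℂ) + w)⁻¹ = Complex.log (a₂ + w) - Complex.log (a₁ + w) := by
  have hne : ∀ x : ℝ, (x:ℂ) + w ≠ 0 := fun x h => hw (by simpa using congrArg Complex.im h)
  apply integral_eq_sub_of_hasDerivAt
  · intro x _
    have h1 : HasDerivAt (fun z : ℂ => Complex.log (z + w)) (((x:ℂ)+w)⁻¹ * 1) (x:ℂ) :=
      (Complex.hasDerivAt_log (by simp [Complex.mem_slitPlane_iff, hw])).comp _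
        ((hasDerivAt_id _).add_const w)
    simpa using h1.comp_ofReal
  · apply ContinuousOn.intervalIntegrable
    exact (ContinuousOn.inv₀ (by fun_prop) (fun x _ => hne x))

lemma L3pos {w : ℂ} (hw : 0 < w.re) (b₁ b₂ : ℝ) :
    ∫ y in b₁..b₂, (w + (y:ℂ) * I)⁻¹ =
      (-I * Complex.log (w + b₂ * I)) - (-I * Complex.log (w + b₁ * I)) := by
  have hne : ∀ y : ℝ, w + (y:ℂ) * I ≠ 0 := fun y h => by
    have := congrArg Complex.re h; simp at this; exact hw.ne' this
  apply integral_eq_sub_of_hasDerivAt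
  · intro y _
    have h1 : HasDerivAt (fun z : ℂ => -I * Complex.log (w + z * I))
        (-I * ((w + (y:ℂ)*I)⁻¹ * ((1:ℂ) * I))) (y:ℂ) := by
      exact (((Complex.hasDerivAt_log (by simp [Complex.mem_slitPlane_iff, hw])).comp _
        (((hasDerivAt_id _).mul_const I).const_add w)).const_mul _)
    have h2 := h1.comp_ofReal
    convert h2 using 1
    · rfl
    have : -I * ((w + (y:ℂ)*I)⁻¹ * ((1:ℂ) * I)) = (w + (y:ℂ)*I)⁻¹ * (-I * I) := by ring
    rw [this]; simp
  · apply ContinuousOn.intervalIntegrable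
    exact (ContinuousOn.inv₀ (by fun_prop) (fun y _ => hne y))

lemma L3neg {w : ℂ} (hw : w.re < 0) (b₁ b₂ : ℝ) :
    ∫ y in b₁..b₂, (w + (y:ℂ) * I)⁻¹ =
      (-I * Complex.log (-(w + b₂ * I))) - (-I * Complex.log (-(w + b₁ * I))) := by
  have hne : ∀ y : ℝ, w + (y:ℂ) * I ≠ 0 := fun y h => by
    have := congrArg Complex.re h; simp at this; exact hw.ne this
  apply integral_eq_sub_of_hasDerivAt
  · intro y _
    have h1 : HasDerivAt (fun z : ℂ => -I * Complex.log (-(w + z * I)))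
        (-I * ((-(w + (y:ℂ)*I))⁻¹ * (-((1:ℂ) * I)))) (y:ℂ) := by
      exact (((Complex.hasDerivAt_log (by simp [Complex.mem_slitPlane_iff]; left; linarith)).comp _
        ((((hasDerivAt_id _).mul_const I).const_add w).neg)).const_mul _)
    have h2 := h1.comp_ofReal
    convert h2 using 1
    · rfl
    rw [inv_neg]
    ring_nf
    simp [Complex.I_sq]
  · apply ContinuousOn.intervalIntegrable
    exact (ContinuousOn.inv₀ (by fun_prop) (fun y _ => hne y))

lemma L4 {q : ℂ} {x1 x2 y1 y2 : ℝ} (h1 : x1 < q.re) (h2 : q.re < x2)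
    (h3 : y1 < q.im) (h4 : q.im < y2) :
    (∫ x : ℝ in x1..x2, ((x:ℂ) + y1 * I - q)⁻¹) - (∫ x : ℝ in x1..x2, ((x:ℂ) + y2 * I - q)⁻¹) +
      I * (∫ y : ℝ in y1..y2, ((x2:ℂ) + y * I - q)⁻¹) -
      I * (∫ y : ℝ in y1..y2, ((x1:ℂ) + y * I - q)⁻¹) = 2 * π * I := by
  set A := (x1:ℂ) + y1 * I - q with hA
  set B := (x2:ℂ) + y1 * I - q with hB
  set Cc := (x2:ℂ) + y2 * I - q with hCc
  set D := (x1:ℂ) + y2 * I - q with hD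
  have hAim : A.im < 0 := by simp [hA]; linarith
  have hDim : 0 < D.im := by simp [hD]; linarith
  have t1 : (∫ x : ℝ in x1..x2, ((x:ℂ) + y1 * I - q)⁻¹) = Complex.log B - Complex.log A := by
    have : ∀ x : ℝ, (x:ℂ) + y1 * I - q = (x:ℂ) + (y1 * I - q) := fun x => by ring
    simp_rw [this]
    rw [L2 (by simp; linarith) x1 x2]
    congr 2 <;> ring
  have t2 : (∫ x : ℝ in x1..x2, ((x:ℂ) + y2 * I - q)⁻¹) = Complex.log Cc - Complex.log D := by
    have : ∀ x : ℝ, (x:ℂ) + y2 * I - q = (x:ℂ) + (y2 * I - q) := fun x => by ring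
    simp_rw [this]
    rw [L2 (by simp; linarith) x1 x2]
    congr 2 <;> ring
  have t3 : (∫ y : ℝ in y1..y2, ((x2:ℂ) + y * I - q)⁻¹) =
      (-I * Complex.log Cc) - (-I * Complex.log B) := by
    have : ∀ y : ℝ, (x2:ℂ) + y * I - q = ((x2:ℂ) - q) + (y:ℂ) * I := fun y => by ring
    simp_rw [this]
    rw [L3pos (by simp; linarith) y1 y2]
    congr 3 <;> ring
  have t4 : (∫ y : ℝ in y1..y2, ((x1:ℂ) + y * I - q)⁻¹) =
      (-I * Complex.log (-D)) - (-I * Complex.log (-A)) := by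
    have : ∀ y : ℝ, (x1:ℂ) + y * I - q = ((x1:ℂ) - q) + (y:ℂ) * I := fun y => by ring
    simp_rw [this]
    rw [L3neg (by simp; linarith) y1 y2]
    congr 3 <;> ring
  rw [t1, t2, t3, t4, logneg_pos hDim, logneg_neg hAim]
  linear_combination (Complex.log B - Complex.log A - Complex.log Cc + Complex.log D
    - 2 * (π:ℂ) * I) * Complex.I_sq

lemma side_split {F : ℂ → ℂ} {q : ℂ} (γ : ℝ → ℂ) (a b : ℝ) (hγ : Continuous γ)
    (hFc : ∀ x ∈ Set.uIcc a b, ContinuousAt F (γ x)) (hne : ∀ x ∈ Set.uIcc a b, γ x ≠ q) :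
    ∫ x in a..b, dslope F q (γ x) =
      (∫ x in a..b, F (γ x) * (γ x - q)⁻¹) - F q * ∫ x in a..b, (γ x - q)⁻¹ := by
  have hinv : ContinuousOn (fun x => (γ x - q)⁻¹) (Set.uIcc a b) :=
    ((hγ.continuousOn.sub continuousOn_const).inv₀ fun x hx => sub_ne_zero.mpr (hne x hx))
  have hFcon : ContinuousOn (fun x => F (γ x)) (Set.uIcc a b) :=
    fun x hx => ((hFc x hx).comp hγ.continuousAt).continuousWithinAt
  have hint1 : IntervalIntegrable (fun x => F (γ x) * (γ x - q)⁻¹) volume a b :=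
    (hFcon.mul hinv).intervalIntegrable
  have hint2 : IntervalIntegrable (fun x => F q * (γ x - q)⁻¹) volume a b :=
    (continuousOn_const.mul hinv).intervalIntegrable
  rw [intervalIntegral.integral_congr
    (g := fun x => F (γ x) * (γ x - q)⁻¹ - F q * (γ x - q)⁻¹) ?_,
    intervalIntegral.integral_sub hint1 hint2, intervalIntegral.integral_const_mul]
  intro x hx
  have h1 : γ x - q ≠ 0 := sub_ne_zero.mpr (hne x hx)
  simp only [dslope_of_ne _ (hne x hx), slope_def_field]
  field_simp

lemma L5 {F : ℂ → ℂ} {U : Set ℂ} (hU : IsOpen U) (hsub : {p : ℂ | 0 ≤ p.re} ⊆ U)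
    (hd : DifferentiableOn ℂ F U) {q : ℂ} (hq : 0 < q.re) {σ T : ℝ}
    (hσ : q.re < σ) (hT : |q.im| < T) :
    (∫ x in (0:ℝ)..σ, F ((x:ℂ) + (-T) * I) * ((x:ℂ) + (-T) * I - q)⁻¹)
      - (∫ x in (0:ℝ)..σ, F ((x:ℂ) + T * I) * ((x:ℂ) + T * I - q)⁻¹)
      + I * (∫ y in (-T)..T, F ((σ:ℂ) + y * I) * ((σ:ℂ) + y * I - q)⁻¹)
      - I * (∫ y in (-T)..T, F ((0:ℂ) + y * I) * ((0:ℂ) + y * I - q)⁻¹)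
      = 2 * π * I * F q := by
  have hT0 : 0 < T := lt_of_le_of_lt (abs_nonneg _) hT
  have hT1 : -T < q.im := neg_lt_of_abs_lt hT
  have hT2 : q.im < T := lt_of_abs_lt hT
  have hσ0 : (0:ℝ) ≤ σ := le_of_lt (lt_trans hq hσ)
  have hqU : q ∈ U := hsub (le_of_lt hq)
  have hFc : ∀ z : ℂ, 0 ≤ z.re → ContinuousAt F z := fun z hz =>
    (hd.differentiableAt (hU.mem_nhds (hsub hz))).continuousAt
  -- rectangle is inside the half-plane
  have hrect : [[(0:ℝ), σ]] ×ℂ [[-T, T]] ⊆ {p : ℂ | 0 ≤ p.re} := by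
    intro z hz
    rw [Complex.mem_reProdIm] at hz
    have := hz.1
    rw [Set.uIcc_of_le hσ0] at this
    exact this.1
  have hdsl : DifferentiableOn ℂ (dslope F q) ([[(0:ℝ), σ]] ×ℂ [[-T, T]]) :=
    ((Complex.differentiableOn_dslope (hU.mem_nhds hqU)).mpr hd).mono (hrect.trans hsub)
  have h0 := Complex.integral_boundary_rect_eq_zero_of_differentiableOn (dslope F q)
    ⟨0, -T⟩ ⟨σ, T⟩ hdsl
  simp only [smul_eq_mul] at h0
  -- split each side
  have hbot := side_split (F := F) (q := q) (fun x : ℝ => (x:ℂ) + (-T) * I) 0 σ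
    (by fun_prop)
    (fun x hx => hFc _ (by rw [Set.uIcc_of_le hσ0] at hx; simpa using hx.1))
    (fun x hx h => by have := congrArg Complex.im h; simp at this; linarith)
  have htop := side_split (F := F) (q := q) (fun x : ℝ => (x:ℂ) + T * I) 0 σ
    (by fun_prop)
    (fun x hx => hFc _ (by rw [Set.uIcc_of_le hσ0] at hx; simpa using hx.1))
    (fun x hx h => by have := congrArg Complex.im h; simp at this; linarith)
  have hright := side_split (F := F) (q := q) (fun y : ℝ => (σ:ℂ) + y * I) (-T) T
    (by fun_prop)
    (fun y hy => hFc _ (by simpa using hσ0))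
    (fun y hy h => by have := congrArg Complex.re h; simp at this; linarith)
  have hleft := side_split (F := F) (q := q) (fun y : ℝ => (0:ℂ) + y * I) (-T) T
    (by fun_prop)
    (fun y hy => hFc _ (by simp))
    (fun y hy h => by have := congrArg Complex.re h; simp at this; linarith)
  have h4 := L4 (q := q) (x1 := 0) (x2 := σ) (y1 := -T) (y2 := T) hq hσ hT1 hT2
  simp only [Complex.ofReal_neg, Complex.ofReal_zero] at hbot htop hright hleft h4 h0 ⊢
  rw [hbot, htop, hright, hleft] at h0
  linear_combination h0 + F q * h4

-- integrability on a vertical line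
lemma L6a {F : ℂ → ℂ} {C b : ℝ} (hC : 0 < C) (hb : 1 < b)
    (hFc : ∀ z : ℂ, 0 ≤ z.re → ContinuousAt F z)
    (hbd : ∀ p : ℂ, 0 ≤ p.re → ‖F p‖ ≤ C * (1 + ‖p‖) ^ (-b))
    {q : ℂ} {c : ℝ} (hc : 0 ≤ c) (hne : c ≠ q.re) :
    Integrable (fun y : ℝ => F ((c:ℂ) + y * I) * ((c:ℂ) + y * I - q)⁻¹) := by
  set δ := |c - q.re| with hδ
  have hδ0 : 0 < δ := abs_pos.mpr (sub_ne_zero.mpr hne)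
  have hcont : Continuous (fun y : ℝ => F ((c:ℂ) + y * I) * ((c:ℂ) + y * I - q)⁻¹) := by
    apply Continuous.mul
    · rw [continuous_iff_continuousAt]
      intro y
      exact (hFc _ (by simp [hc])).comp (by fun_prop)
    · apply Continuous.inv₀ (by fun_prop)
      intro y h
      apply hne
      have := congrArg Complex.re h
      simp at this
      linarith
  have hmaj : Integrable (fun y : ℝ => (C * δ⁻¹) * (1 + ‖y‖) ^ (-b)) :=
    (integrable_one_add_norm (by simpa using hb)).const_mul _
  refine hmaj.mono' hcont.aestronglyMeasurable ?_
  filter_upwards with y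
  have hzre : (0:ℝ) ≤ ((c:ℂ) + y * I).re := by simp [hc]
  rw [norm_mul]
  have h1 : ‖F ((c:ℂ) + y * I)‖ ≤ C * (1 + ‖(y:ℝ)‖) ^ (-b) := by
    refine le_trans (hbd _ hzre) ?_
    have hy : (1:ℝ) + ‖(y:ℝ)‖ ≤ 1 + ‖(c:ℂ) + y * I‖ := by
      have : |y| ≤ ‖(c:ℂ) + y * I‖ := by
        have := Complex.abs_im_le_norm ((c:ℂ) + y * I)
        simpa using this
      simpa using this
    have := Real.rpow_le_rpow_of_nonpos (by positivity) hy (by linarith : -b ≤ 0)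
    exact mul_le_mul_of_nonneg_left this (le_of_lt hC)
  have h2 : ‖((c:ℂ) + y * I - q)⁻¹‖ ≤ δ⁻¹ := by
    rw [norm_inv]
    apply inv_anti₀ hδ0
    have := Complex.abs_re_le_norm ((c:ℂ) + y * I - q)
    refine le_trans (le_of_eq ?_) this
    simp [hδ]
  calc ‖F ((c:ℂ) + y * I)‖ * ‖((c:ℂ) + y * I - q)⁻¹‖
      ≤ (C * (1 + ‖(y:ℝ)‖) ^ (-b)) * δ⁻¹ :=
        mul_le_mul h1 h2 (norm_nonneg _) (by positivity)
    _ = (C * δ⁻¹) * (1 + ‖(y:ℝ)‖) ^ (-b) := by ring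

-- bound on horizontal segments
lemma L6b {F : ℂ → ℂ} {C b : ℝ} (hC : 0 < C) (hb : 1 < b)
    (hbd : ∀ p : ℂ, 0 ≤ p.re → ‖F p‖ ≤ C * (1 + ‖p‖) ^ (-b))
    {q : ℂ} {σ : ℝ} (hσ : 0 ≤ σ) {τ : ℝ} (hτ : |q.im| < |τ|) :
    ‖∫ x in (0:ℝ)..σ, F ((x:ℂ) + τ * I) * ((x:ℂ) + τ * I - q)⁻¹‖ ≤
      C * (|τ| - |q.im|)⁻¹ * |σ - 0| := by
  apply intervalIntegral.norm_integral_le_of_norm_le_const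
  intro x hx
  rw [Set.uIoc_of_le hσ] at hx
  have hx0 : (0:ℝ) ≤ x := le_of_lt hx.1
  have hd0 : 0 < |τ| - |q.im| := by linarith
  rw [norm_mul]
  have h1 : ‖F ((x:ℂ) + τ * I)‖ ≤ C := by
    refine le_trans (hbd _ (by simp [hx0])) ?_
    have : (1 + ‖(x:ℂ) + τ * I‖) ^ (-b) ≤ 1 :=
      Real.rpow_le_one_of_one_le_of_nonpos (le_add_of_nonneg_right (norm_nonneg _)) (by linarith)
    nlinarith
  have h2 : ‖((x:ℂ) + τ * I - q)⁻¹‖ ≤ (|τ| - |q.im|)⁻¹ := by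
    rw [norm_inv]
    apply inv_anti₀ hd0
    have h3 := Complex.abs_im_le_norm ((x:ℂ) + τ * I - q)
    refine le_trans ?_ h3
    have : ((x:ℂ) + τ * I - q).im = τ - q.im := by simp
    rw [this]
    have := abs_sub_abs_le_abs_sub τ q.im
    linarith [abs_sub_abs_le_abs_sub τ q.im]
  calc ‖F ((x:ℂ) + τ * I)‖ * ‖((x:ℂ) + τ * I - q)⁻¹‖ ≤ C * (|τ| - |q.im|)⁻¹ :=
    mul_le_mul h1 h2 (norm_nonneg _) (le_of_lt hC)

lemma L6d {F : ℂ → ℂ} {C b : ℝ} (hC : 0 < C) (hb : 1 < b)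
    (hFc : ∀ z : ℂ, 0 ≤ z.re → ContinuousAt F z)
    (hbd : ∀ p : ℂ, 0 ≤ p.re → ‖F p‖ ≤ C * (1 + ‖p‖) ^ (-b))
    {q : ℂ} (hq : 0 < q.re) {σ : ℝ} (hσ : q.re < σ) :
    ‖∫ y : ℝ, F ((σ:ℂ) + y * I) * ((σ:ℂ) + y * I - q)⁻¹‖ ≤
      C * (σ - q.re)⁻¹ * ∫ y : ℝ, (1 + ‖y‖) ^ (-b) := by
  have hσ0 : (0:ℝ) ≤ σ := le_of_lt (lt_trans hq hσ)
  have hδ0 : 0 < σ - q.re := by linarith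
  have hmaj : Integrable (fun y : ℝ => (C * (σ - q.re)⁻¹) * (1 + ‖y‖) ^ (-b)) :=
    (integrable_one_add_norm (by simpa using hb)).const_mul _
  refine le_trans (norm_integral_le_of_norm_le hmaj ?_) (le_of_eq (MeasureTheory.integral_const_mul _ _))
  filter_upwards with y
  rw [norm_mul]
  have h1 : ‖F ((σ:ℂ) + y * I)‖ ≤ C * (1 + ‖(y:ℝ)‖) ^ (-b) := by
    refine le_trans (hbd _ (by simp [hσ0])) ?_
    have hy : (1:ℝ) + ‖(y:ℝ)‖ ≤ 1 + ‖(σ:ℂ) + y * I‖ := by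
      have := Complex.abs_im_le_norm ((σ:ℂ) + y * I)
      simp at this ⊢
      linarith
    have := Real.rpow_le_rpow_of_nonpos (by positivity) hy (by linarith : -b ≤ 0)
    exact mul_le_mul_of_nonneg_left this (le_of_lt hC)
  have h2 : ‖((σ:ℂ) + y * I - q)⁻¹‖ ≤ (σ - q.re)⁻¹ := by
    rw [norm_inv]
    apply inv_anti₀ hδ0
    have h3 := Complex.abs_re_le_norm ((σ:ℂ) + y * I - q)
    refine le_trans ?_ h3
    have : ((σ:ℂ) + y * I - q).re = σ - q.re := by simp
    rw [this, le_abs]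
    left; rfl
  calc ‖F ((σ:ℂ) + y * I)‖ * ‖((σ:ℂ) + y * I - q)⁻¹‖
      ≤ (C * (1 + ‖(y:ℝ)‖) ^ (-b)) * (σ - q.re)⁻¹ :=
        mul_le_mul h1 h2 (norm_nonneg _) (by positivity)
    _ = (C * (σ - q.re)⁻¹) * (1 + ‖(y:ℝ)‖) ^ (-b) := by ring

lemma step2 {F : ℂ → ℂ} {U : Set ℂ} (hU : IsOpen U) (hsub : {p : ℂ | 0 ≤ p.re} ⊆ U)
    (hd : DifferentiableOn ℂ F U) {C b : ℝ} (hC : 0 < C) (hb : 1 < b)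
    (hbd : ∀ p : ℂ, 0 ≤ p.re → ‖F p‖ ≤ C * (1 + ‖p‖) ^ (-b))
    {q : ℂ} (hq : 0 < q.re) :
    ∫ y : ℝ, F (I * y) * (q - I * y)⁻¹ = 2 * π * F q := by
  have hFc : ∀ z : ℂ, 0 ≤ z.re → ContinuousAt F z := fun z hz =>
    (hd.differentiableAt (hU.mem_nhds (hsub hz))).continuousAt
  set J : ℝ → ℂ := fun c => ∫ y : ℝ, F ((c:ℂ) + y * I) * ((c:ℂ) + y * I - q)⁻¹ with hJ
  have claim1 : ∀ σ : ℝ, q.re < σ → J σ = J 0 + 2 * π * F q := by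
    intro σ hσ
    have hσ0 : (0:ℝ) ≤ σ := le_of_lt (lt_trans hq hσ)
    -- limits as T → ∞
    have hbot0 : Tendsto (fun T : ℝ =>
        ∫ x in (0:ℝ)..σ, F ((x:ℂ) + -(T:ℝ) * I) * ((x:ℂ) + -(T:ℝ) * I - q)⁻¹) atTop (𝓝 0) := by
      apply squeeze_zero_norm' (a := fun T : ℝ => C * (|T| - |q.im|)⁻¹ * |σ - 0|)
      · filter_upwards [eventually_gt_atTop |q.im|, eventually_ge_atTop (0:ℝ)] with T h1 h2
        have h3 : |q.im| < |(-T)| := by rw [abs_neg, _root_.abs_of_nonneg h2]; exact h1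
        have := L6b hC hb hbd (q := q) hσ0 (τ := -T) h3
        simpa [Complex.ofReal_neg, abs_neg, _root_.abs_of_nonneg h2] using this
      · have h1 : Tendsto (fun T : ℝ => (|T| - |q.im|)⁻¹) atTop (𝓝 0) := by
          apply Filter.Tendsto.inv_tendsto_atTop
          apply tendsto_atTop_add_const_right
          exact tendsto_abs_atTop_atTop
        simpa using (h1.const_mul C).mul_const |σ - 0|
    have htop0 : Tendsto (fun T : ℝ =>
        ∫ x in (0:ℝ)..σ, F ((x:ℂ) + (T:ℝ) * I) * ((x:ℂ) + (T:ℝ) * I - q)⁻¹) atTop (𝓝 0) := by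
      apply squeeze_zero_norm' (a := fun T : ℝ => C * (|T| - |q.im|)⁻¹ * |σ - 0|)
      · filter_upwards [eventually_gt_atTop |q.im|, eventually_ge_atTop (0:ℝ)] with T h1 h2
        have := L6b hC hb hbd (q := q) hσ0 (τ := T) (by rwa [_root_.abs_of_nonneg h2])
        simpa [_root_.abs_of_nonneg h2] using this
      · have h1 : Tendsto (fun T : ℝ => (|T| - |q.im|)⁻¹) atTop (𝓝 0) := by
          apply Filter.Tendsto.inv_tendsto_atTop
          apply tendsto_atTop_add_const_right
          exact tendsto_abs_atTop_atTop
        simpa using (h1.const_mul C).mul_const |σ - 0|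
    have hrightT : Tendsto (fun T : ℝ =>
        ∫ y in -T..T, F ((σ:ℂ) + y * I) * ((σ:ℂ) + y * I - q)⁻¹) atTop (𝓝 (J σ)) :=
      intervalIntegral_tendsto_integral (L6a hC hb hFc hbd hσ0 (ne_of_gt hσ))
        tendsto_neg_atTop_atBot tendsto_id
    have hleftT : Tendsto (fun T : ℝ =>
        ∫ y in -T..T, F (((0:ℝ):ℂ) + y * I) * (((0:ℝ):ℂ) + y * I - q)⁻¹) atTop (𝓝 (J 0)) :=
      intervalIntegral_tendsto_integral (L6a hC hb hFc hbd le_rfl (ne_of_lt hq))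
        tendsto_neg_atTop_atBot tendsto_id
    have hcombo : Tendsto (fun T : ℝ =>
        (∫ x in (0:ℝ)..σ, F ((x:ℂ) + -(T:ℝ) * I) * ((x:ℂ) + -(T:ℝ) * I - q)⁻¹)
          - (∫ x in (0:ℝ)..σ, F ((x:ℂ) + (T:ℝ) * I) * ((x:ℂ) + (T:ℝ) * I - q)⁻¹)
          + I * (∫ y in -T..T, F ((σ:ℂ) + y * I) * ((σ:ℂ) + y * I - q)⁻¹)
          - I * (∫ y in -T..T, F (((0:ℝ):ℂ) + y * I) * (((0:ℝ):ℂ) + y * I - q)⁻¹))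
        atTop (𝓝 (0 - 0 + I * J σ - I * J 0)) :=
      ((hbot0.sub htop0).add (hrightT.const_mul I)).sub (hleftT.const_mul I)
    have hconst : ∀ᶠ T : ℝ in atTop,
        ((∫ x in (0:ℝ)..σ, F ((x:ℂ) + -(T:ℝ) * I) * ((x:ℂ) + -(T:ℝ) * I - q)⁻¹)
          - (∫ x in (0:ℝ)..σ, F ((x:ℂ) + (T:ℝ) * I) * ((x:ℂ) + (T:ℝ) * I - q)⁻¹)
          + I * (∫ y in -T..T, F ((σ:ℂ) + y * I) * ((σ:ℂ) + y * I - q)⁻¹)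
          - I * (∫ y in -T..T, F (((0:ℝ):ℂ) + y * I) * (((0:ℝ):ℂ) + y * I - q)⁻¹))
          = 2 * π * I * F q := by
      filter_upwards [eventually_gt_atTop |q.im|] with T hT
      have := L5 hU hsub hd hq hσ hT
      simpa using this
    have heq : 0 - 0 + I * J σ - I * J 0 = 2 * π * I * F q :=
      tendsto_nhds_unique hcombo ((tendsto_congr' hconst).mpr tendsto_const_nhds)
    have h5 : I * (J σ - (J 0 + 2 * π * F q)) = 0 := by linear_combination heq
    have h6 := (mul_eq_zero.mp h5).resolve_left Complex.I_ne_zero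
    linear_combination h6
  -- J is eventually constant and tends to 0
  have claim2 : Tendsto J atTop (𝓝 0) := by
    apply squeeze_zero_norm' (a := fun σ : ℝ => C * (σ - q.re)⁻¹ * ∫ y : ℝ, (1 + ‖y‖) ^ (-b))
    · filter_upwards [eventually_gt_atTop q.re] with σ hσ
      exact L6d hC hb hFc hbd hq hσ
    · have h1 : Tendsto (fun σ : ℝ => (σ - q.re)⁻¹) atTop (𝓝 0) := by
        apply Filter.Tendsto.inv_tendsto_atTop
        apply tendsto_atTop_add_const_right
        exact tendsto_id
      simpa using (h1.const_mul C).mul_const (∫ y : ℝ, (1 + ‖y‖) ^ (-b))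
  have hJ0 : J 0 + 2 * π * F q = 0 := by
    have hev : ∀ᶠ σ : ℝ in atTop, J σ = J 0 + 2 * π * F q := by
      filter_upwards [eventually_gt_atTop q.re] with σ hσ
      exact claim1 σ hσ
    exact (tendsto_nhds_unique ((tendsto_congr' hev).mp claim2) tendsto_const_nhds).symm
  have : J 0 = -(2 * π * F q) := by linear_combination hJ0
  have hfinal : ∫ y : ℝ, F (I * y) * (q - I * y)⁻¹ = -(J 0) := by
    rw [hJ]
    simp only [Complex.ofReal_zero, zero_add]
    rw [← MeasureTheory.integral_neg]
    congr 1
    funext y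
    rw [mul_comm (y:ℂ) I, ← neg_sub q (I * (y:ℂ)), inv_neg]
    ring
  rw [hfinal, this]
  ring


theorem stmt_4 (F : ℂ → ℂ) (C b : ℝ) (hC : 0 < C) (hb : 1 < b)
    (hF : ∃ U : Set ℂ, IsOpen U ∧ {p : ℂ | 0 ≤ p.re} ⊆ U ∧ DifferentiableOn ℂ F U)
    (hbd : ∀ p : ℂ, 0 ≤ p.re → ‖F p‖ ≤ C * (1 + ‖p‖) ^ (-b))
    (f : ℝ → ℂ)
    (hf : ∀ t : ℝ, f t = (1 / (2 * Real.pi) : ℂ) *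
      ∫ η : ℝ, Complex.exp (Complex.I * t * η) * F (Complex.I * η)) :
    ∀ q : ℂ, 0 < q.re →
      ∫ t in Set.Ioi (0 : ℝ), Complex.exp (-q * t) * f t = F q := by
  obtain ⟨U, hU, hsub, hd⟩ := hF
  intro q hq
  have hFc : ∀ z : ℂ, 0 ≤ z.re → ContinuousAt F z := fun z hz =>
    (hd.differentiableAt (hU.mem_nhds (hsub hz))).continuousAt
  have hFη_cont : Continuous (fun η : ℝ => F (I * η)) :=
    continuous_iff_continuousAt.mpr fun η => (hFc _ (by simp)).comp (by fun_prop)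
  have hFη_bd : ∀ η : ℝ, ‖F (I * η)‖ ≤ C * (1 + ‖(η:ℝ)‖) ^ (-b) := by
    intro η
    refine le_trans (hbd _ (by simp)) ?_
    have : ‖I * (η:ℂ)‖ = ‖(η:ℝ)‖ := by simp
    rw [this]
  have hmaj2 : Integrable (fun η : ℝ => C * (1 + ‖η‖) ^ (-b)) :=
    (integrable_one_add_norm (by simpa using hb)).const_mul C
  have hg1 : Integrable (fun t : ℝ => Real.exp (-q.re * t)) (volume.restrict (Ioi 0)) :=
    exp_neg_integrableOn_Ioi 0 hq
  have hProd : Integrable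
      (fun p : ℝ × ℝ => Complex.exp (-q * p.1) * (Complex.exp (I * p.1 * p.2) * F (I * p.2)))
      ((volume.restrict (Ioi (0:ℝ))).prod volume) := by
    refine (hg1.mul_prod hmaj2).mono' ?_ ?_
    · apply Continuous.aestronglyMeasurable
      refine Continuous.mul ?_ (Continuous.mul ?_ (hFη_cont.comp continuous_snd))
      · fun_prop
      · fun_prop
    · filter_upwards with p
      rw [norm_mul, norm_mul]
      have e1 : ‖Complex.exp (-q * p.1)‖ = Real.exp (-q.re * p.1) := by
        rw [Complex.norm_exp]; simp
      have e2 : ‖Complex.exp (I * p.1 * p.2)‖ = 1 := by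
        rw [Complex.norm_exp]; simp
      rw [e1, e2, one_mul]
      exact mul_le_mul_of_nonneg_left (hFη_bd p.2) (le_of_lt (Real.exp_pos _))
  have step1 : ∫ t in Set.Ioi (0:ℝ), Complex.exp (-q * t) * f t =
      (1 / (2 * Real.pi) : ℂ) * ∫ η : ℝ, ∫ t in Set.Ioi (0:ℝ),
        Complex.exp (-q * t) * (Complex.exp (I * t * η) * F (I * η)) := by
    have h1 : ∀ t : ℝ, Complex.exp (-q * t) * f t =
        (1 / (2 * Real.pi) : ℂ) * ∫ η : ℝ,
          Complex.exp (-q * t) * (Complex.exp (I * t * η) * F (I * η)) := by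
      intro t
      rw [hf t, MeasureTheory.integral_const_mul]
      ring
    simp_rw [h1]
    rw [MeasureTheory.integral_const_mul, MeasureTheory.integral_integral_swap hProd]
  have hinner : ∀ η : ℝ, (∫ t in Set.Ioi (0:ℝ),
      Complex.exp (-q * t) * (Complex.exp (I * t * η) * F (I * η)))
      = F (I * η) * (q - I * η)⁻¹ := by
    intro η
    have h2 : ∀ t : ℝ, Complex.exp (-q * t) * (Complex.exp (I * t * η) * F (I * η)) =
        Complex.exp (-(q - I * η) * t) * F (I * η) := by
      intro t
      rw [← mul_assoc, ← Complex.exp_add]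
      congr 2
      ring
    simp_rw [h2]
    rw [MeasureTheory.integral_mul_const, L1 (by simp [hq])]
    ring
  simp_rw [step1, hinner]
  rw [step2 hU hsub hd hC hb hbd hq]
  have hπ : (π : ℂ) ≠ 0 := by
    simpa using Real.pi_ne_zero
  field_simp
end
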